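/- Let R be a domain and X a partially ordered set of variables. The map Y ↦ (Y) is a bijection between maximal compatible subsets of X and maximal small ideals of R[X], with inverse P ↦ P ∩ X. -/

import Mathlib

/-- `Y` is upward compatible in the poset `X`: every finite subset of `Y`
has an upper bound in `X`. -/
def UpCompatible {X : Type*} [PartialOrder X] (Y : Set X) : Prop :=
  ∀ F : Finset X, ↑F ⊆ Y → ∃ x : X, ∀ y ∈ F, y ≤ x

/-- A polynomial `f ∈ R[X]` is dominated by the variable `x`: every monomial
appearing in `f` contains some variable `y ≤ x`. -/
def Dominated {R : Type*} [CommRing R] {X : Type*} [PartialOrder X]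
    (f : MvPolynomial X R) (x : X) : Prop :=
  ∀ m ∈ f.support, ∃ y : X, m y ≠ 0 ∧ y ≤ x

/-- A polynomial is small if it is dominated by some variable. -/
def SmallPoly {R : Type*} [CommRing R] {X : Type*} [PartialOrder X]
    (f : MvPolynomial X R) : Prop :=
  ∃ x : X, Dominated f x

/-- An ideal is small if all of its elements are small. -/
def SmallIdeal {R : Type*} [CommRing R] {X : Type*} [PartialOrder X]
    (I : Ideal (MvPolynomial X R)) : Prop :=
  ∀ f ∈ I, SmallPoly f

/-- A maximal small ideal: a small ideal not properly contained in any small ideal. -/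
def MaxSmallIdeal {R : Type*} [CommRing R] {X : Type*} [PartialOrder X]
    (P : Ideal (MvPolynomial X R)) : Prop :=
  SmallIdeal P ∧ ∀ I : Ideal (MvPolynomial X R), SmallIdeal I → P ≤ I → I = P

/-- A maximal compatible subset of the variable poset. -/
def MaxCompatible {X : Type*} [PartialOrder X] (Y : Set X) : Prop :=
  UpCompatible Y ∧ ∀ Y' : Set X, Y ⊆ Y' → UpCompatible Y' → Y' = Y

set_option linter.unusedSectionVars false

namespace MaxSmallAux

variable {R : Type*} [CommRing R] [IsDomain R] {X : Type*} [PartialOrder X]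

lemma dominated_mono {f : MvPolynomial X R} {x z : X} (h : Dominated f x) (hxz : x ≤ z) :
    Dominated f z := fun m hm => by
  obtain ⟨y, hy, hyx⟩ := h m hm
  exact ⟨y, hy, hyx.trans hxz⟩

lemma exp_le_totalDegree {f : MvPolynomial X R} {m : X →₀ ℕ} (hm : m ∈ f.support) (b : X) :
    m b ≤ f.totalDegree := by
  refine le_trans ?_ (MvPolynomial.le_totalDegree hm)
  rw [Finsupp.sum]
  by_cases hb : b ∈ m.support
  · exact Finset.single_le_sum (f := fun x => m x) (fun _ _ => Nat.zero_le _) hb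
  · simp [Finsupp.notMem_support_iff.mp hb]

lemma pair_transfer (f p : MvPolynomial X R) (b : X) (hb : Dominated p b) (z : X)
    (hq : Dominated (f + (MvPolynomial.X b) ^ (f.totalDegree + 1) * p) z) :
    Dominated f z ∧ Dominated p z := by
  classical
  set N := f.totalDegree + 1 with hN
  set q := f + (MvPolynomial.X b) ^ N * p with hqdef
  have hcoeff : ∀ m : X →₀ ℕ, MvPolynomial.coeff m ((MvPolynomial.X b : MvPolynomial X R) ^ N * p)
      = if Finsupp.single b N ≤ m then MvPolynomial.coeff (m - Finsupp.single b N) p else 0 := by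
    intro m
    rw [MvPolynomial.X_pow_eq_monomial, MvPolynomial.coeff_monomial_mul']
    simp
  have hf : Dominated f z := by
    intro m hm
    have hmb : m b ≤ f.totalDegree := exp_le_totalDegree hm b
    have h0 : MvPolynomial.coeff m ((MvPolynomial.X b : MvPolynomial X R) ^ N * p) = 0 := by
      rw [hcoeff, if_neg]
      rw [Finsupp.single_le_iff]
      omega
    have hmq : m ∈ q.support := by
      rw [MvPolynomial.mem_support_iff, hqdef, MvPolynomial.coeff_add, h0, add_zero]
      exact MvPolynomial.mem_support_iff.mp hm
    exact hq m hmq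
  refine ⟨hf, ?_⟩
  by_cases hbz : b ≤ z
  · exact dominated_mono hb hbz
  · intro m hm
    have key : (Finsupp.single b N + m) ∈ q.support := by
      rw [MvPolynomial.mem_support_iff, hqdef, MvPolynomial.coeff_add]
      have h1 : MvPolynomial.coeff (Finsupp.single b N + m) f = 0 := by
        rw [← MvPolynomial.notMem_support_iff]
        intro hmem
        have h2 := exp_le_totalDegree hmem b
        simp [Finsupp.add_apply, Finsupp.single_apply, hN] at h2
        omega
      have h2 : MvPolynomial.coeff (Finsupp.single b N + m)
          ((MvPolynomial.X b : MvPolynomial X R) ^ N * p) = MvPolynomial.coeff m p := by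
        rw [hcoeff, if_pos (self_le_add_right _ _)]
        simp
      rw [h1, h2, zero_add]
      exact MvPolynomial.mem_support_iff.mp hm
    obtain ⟨y, hy, hyz⟩ := hq _ key
    rcases eq_or_ne y b with rfl | hyb
    · exact absurd hyz hbz
    · refine ⟨y, ?_, hyz⟩
      have hs : Finsupp.single b N y = 0 := Finsupp.single_eq_of_ne' (Ne.symm hyb)
      simpa [Finsupp.add_apply, hs] using hy

lemma combine {I : Ideal (MvPolynomial X R)} (hI : SmallIdeal I) :
    ∀ S : Finset (MvPolynomial X R), (∀ f ∈ S, f ∈ I) →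
      ∃ w ∈ I, ∀ z : X, Dominated w z → ∀ f ∈ S, Dominated f z := by
  classical
  intro S
  induction S using Finset.induction_on with
  | empty => exact fun _ => ⟨0, I.zero_mem, fun z _ f hf => absurd hf (Finset.notMem_empty f)⟩
  | @insert f S hfS ih =>
    intro hS
    obtain ⟨w, hwI, hw⟩ := ih fun g hg => hS g (Finset.mem_insert_of_mem hg)
    obtain ⟨b, hb⟩ := hI w hwI
    refine ⟨f + (MvPolynomial.X b) ^ (f.totalDegree + 1) * w,
      I.add_mem (hS f (Finset.mem_insert_self f S)) (I.mul_mem_left _ hwI), ?_⟩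
    intro z hz g hg
    obtain ⟨hfz, hwz⟩ := pair_transfer f w b hb z hz
    rcases Finset.mem_insert.mp hg with rfl | hg
    · exact hfz
    · exact hw z hwz g hg

/-- The key Zorn property. -/
def DomProp {R : Type*} [CommRing R] {X : Type*} [PartialOrder X]
    (I : Ideal (MvPolynomial X R)) (Z : Set X) : Prop :=
  ∀ G : Finset X, ↑G ⊆ Z → ∀ p ∈ I, ∃ z : X, (∀ g ∈ G, g ≤ z) ∧ Dominated p z

lemma small_le_span_compatible {I : Ideal (MvPolynomial X R)} (hI : SmallIdeal I)
    (Y₀ : Set X) (hY₀ : ∀ y ∈ Y₀, MvPolynomial.X y ∈ I) :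
    ∃ Z : Set X, Y₀ ⊆ Z ∧ UpCompatible Z ∧
      I ≤ Ideal.span (MvPolynomial.X '' Z : Set (MvPolynomial X R)) := by
  classical
  have hbase : DomProp I Y₀ := by
    intro G hG p hp
    have hmem : ∀ f ∈ insert p (G.image MvPolynomial.X), f ∈ I := by
      intro f hf
      rcases Finset.mem_insert.mp hf with rfl | hf
      · exact hp
      · obtain ⟨g, hg, rfl⟩ := Finset.mem_image.mp hf
        exact hY₀ g (hG hg)
    obtain ⟨w, hwI, hw⟩ := combine hI (insert p (G.image MvPolynomial.X)) hmem
    obtain ⟨z, hz⟩ := hI w hwI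
    refine ⟨z, ?_, hw z hz p (Finset.mem_insert_self _ _)⟩
    intro g hg
    have hXg : Dominated (MvPolynomial.X g : MvPolynomial X R) z :=
      hw z hz _ (Finset.mem_insert_of_mem (Finset.mem_image_of_mem _ hg))
    obtain ⟨y, hy, hyz⟩ := hXg (Finsupp.single g 1)
      (by rw [MvPolynomial.support_X]; simp)
    have hgy : g = y := by
      by_contra hne
      simp [Finsupp.single_apply, hne] at hy
    exact hgy ▸ hyz
  have hchainub : ∀ c ⊆ {Z : Set X | Y₀ ⊆ Z ∧ DomProp I Z}, IsChain (· ⊆ ·) c → c.Nonempty →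
      ∃ ub ∈ {Z : Set X | Y₀ ⊆ Z ∧ DomProp I Z}, ∀ s ∈ c, s ⊆ ub := by
    intro c hc hchain hne
    refine ⟨⋃₀ c, ⟨?_, ?_⟩, fun s hs => Set.subset_sUnion_of_mem hs⟩
    · obtain ⟨t, ht⟩ := hne; exact (hc ht).1.trans (Set.subset_sUnion_of_mem ht)
    · intro G hG p hp
      have hdir : DirectedOn (fun i j : Set X => i ⊆ j) c := hchain.directedOn
      obtain ⟨t, htc, hGt⟩ :=
        hdir.exists_mem_subset_of_finset_subset_biUnion (f := fun s : Set X => s) hne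
          (by rwa [← Set.sUnion_eq_biUnion])
      exact (hc htc).2 G hGt p hp
  obtain ⟨Z, hY₀Z, hZmax⟩ := zorn_subset_nonempty {Z : Set X | Y₀ ⊆ Z ∧ DomProp I Z}
    hchainub Y₀ ⟨subset_rfl, hbase⟩
  obtain ⟨hY₀Z', hDZ⟩ := hZmax.1
  refine ⟨Z, hY₀Z', ?_, ?_⟩
  · intro G hG
    obtain ⟨z, hz, -⟩ := hDZ G hG 0 I.zero_mem
    exact ⟨z, hz⟩
  · intro p hp
    rw [MvPolynomial.mem_ideal_span_X_image]
    intro m hm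
    by_contra hcon
    push_neg at hcon
    have hbad : ∀ v ∈ m.support, ∃ (G : Finset X) (pv : MvPolynomial X R),
        ↑G ⊆ Z ∧ pv ∈ I ∧ ¬∃ z : X, (∀ g ∈ G, g ≤ z) ∧ v ≤ z ∧ Dominated pv z := by
      intro v hv
      have hvZ : v ∉ Z := fun hvZ => (Finsupp.mem_support_iff.mp hv) (hcon v hvZ)
      have hnD : ¬ DomProp I (insert v Z) := by
        intro hDins
        have heq : insert v Z = Z :=
          subset_antisymm
            (hZmax.2 ⟨hY₀Z'.trans (Set.subset_insert _ _), hDins⟩ (Set.subset_insert _ _))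
            (Set.subset_insert _ _)
        exact hvZ (heq ▸ Set.mem_insert v Z)
      rw [DomProp] at hnD
      push_neg at hnD
      obtain ⟨G, hGZ, pv, hpvI, hbadz⟩ := hnD
      refine ⟨G.erase v, pv, ?_, hpvI, ?_⟩
      · intro g hg
        have hg' := Finset.mem_erase.mp hg
        rcases hGZ hg'.2 with h | h
        · exact absurd h hg'.1
        · exact h
      · rintro ⟨z, hGz, hvz, hdom⟩
        refine hbadz z ?_ hdom
        intro g hg
        rcases eq_or_ne g v with rfl | hne
        · exact hvz
        · exact hGz g (Finset.mem_erase.mpr ⟨hne, hg⟩)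
    choose Gv pv hGvZ hpvI hbadv using hbad
    set S0 : Finset (MvPolynomial X R) :=
      insert p (m.support.attach.image (fun v => pv v.1 v.2)) with hS0
    have hmem : ∀ f ∈ S0, f ∈ I := by
      intro f hf
      rw [hS0] at hf
      rcases Finset.mem_insert.mp hf with rfl | hf
      · exact hp
      · obtain ⟨v, -, rfl⟩ := Finset.mem_image.mp hf
        exact hpvI v.1 v.2
    obtain ⟨w, hwI, hw⟩ := combine hI S0 hmem
    set G0 : Finset X := m.support.attach.biUnion (fun v => Gv v.1 v.2) with hG0
    have hGsub : ↑G0 ⊆ Z := by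
      intro g hg
      rw [hG0, Finset.coe_biUnion] at hg
      simp only [Set.mem_iUnion] at hg
      obtain ⟨v, -, hgv⟩ := hg
      exact hGvZ v.1 v.2 hgv
    obtain ⟨z, hGz, hwz⟩ := hDZ G0 hGsub w hwI
    have hpz : Dominated p z := hw z hwz p (hS0 ▸ Finset.mem_insert_self _ _)
    obtain ⟨y, hy, hyz⟩ := hpz m hm
    have hym : y ∈ m.support := Finsupp.mem_support_iff.mpr hy
    refine hbadv y hym ⟨z, ?_, hyz, ?_⟩
    · intro g hg
      refine hGz g ?_
      rw [hG0]
      exact Finset.mem_biUnion.mpr ⟨⟨y, hym⟩, Finset.mem_attach _ _, hg⟩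
    · refine hw z hwz (pv y hym) ?_
      rw [hS0]
      exact Finset.mem_insert_of_mem (Finset.mem_image_of_mem _ (Finset.mem_attach _ ⟨y, hym⟩))


lemma span_small {Y : Set X} (hY : UpCompatible Y) :
    SmallIdeal (Ideal.span (MvPolynomial.X '' Y : Set (MvPolynomial X R))) := by
  classical
  intro f hf
  rw [MvPolynomial.mem_ideal_span_X_image] at hf
  choose y hyY hy using hf
  set F : Finset X := f.support.attach.image (fun m => y m.1 m.2) with hF
  have hsub : ↑F ⊆ Y := by
    intro a ha
    rw [hF, Finset.coe_image] at ha
    obtain ⟨m, -, rfl⟩ := ha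
    exact hyY m.1 m.2
  obtain ⟨x, hx⟩ := hY F hsub
  refine ⟨x, fun m hm => ⟨y m hm, hy m hm, hx _ ?_⟩⟩
  rw [hF]
  exact Finset.mem_image_of_mem _ (Finset.mem_attach _ ⟨m, hm⟩)

lemma mem_span_X_iff {Z : Set X} {x : X} :
    MvPolynomial.X x ∈ Ideal.span (MvPolynomial.X '' Z : Set (MvPolynomial X R)) ↔ x ∈ Z := by
  rw [MvPolynomial.mem_ideal_span_X_image]
  constructor
  · intro h
    obtain ⟨i, hiZ, hi⟩ := h (Finsupp.single x 1)
      (by rw [MvPolynomial.support_X]; simp)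
    have hxi : x = i := by
      by_contra hne
      simp [Finsupp.single_apply, hne] at hi
    exact hxi ▸ hiZ
  · intro hx m hm
    rw [MvPolynomial.support_X, Finset.mem_singleton] at hm
    subst hm
    exact ⟨x, hx, by simp⟩


end MaxSmallAux

open MaxSmallAux in
/-- `Y ↦ (Y)` is a bijection between maximal compatible subsets of `X` and
maximal small ideals of `R[X]`, with inverse `P ↦ P ∩ X`. -/
theorem maxCompatible_maxSmall_bijection {R : Type*} [CommRing R] [IsDomain R]
    {X : Type*} [PartialOrder X] :
    (∀ Y : Set X, MaxCompatible Y →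
      MaxSmallIdeal (Ideal.span (MvPolynomial.X '' Y : Set (MvPolynomial X R))) ∧
      {x : X | MvPolynomial.X x ∈
        Ideal.span (MvPolynomial.X '' Y : Set (MvPolynomial X R))} = Y) ∧
    (∀ P : Ideal (MvPolynomial X R), MaxSmallIdeal P →
      MaxCompatible {x : X | MvPolynomial.X x ∈ P} ∧
      Ideal.span (MvPolynomial.X '' {x : X | MvPolynomial.X x ∈ P}) = P) := by
  constructor
  · intro Y hY
    refine ⟨⟨span_small hY.1, ?_⟩, ?_⟩
    · intro I hI hle
      obtain ⟨Z, hYZ, hZcomp, hIZ⟩ := small_le_span_compatible hI Y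
        (fun y hy => hle (Ideal.subset_span ⟨y, hy, rfl⟩))
      have hZY : Z = Y := hY.2 Z hYZ hZcomp
      exact le_antisymm (hZY ▸ hIZ) hle
    · ext x
      exact mem_span_X_iff
  · intro P hP
    obtain ⟨Z, -, hZcomp, hPZ⟩ := small_le_span_compatible hP.1 ∅ (by simp)
    have hspanZ : Ideal.span (MvPolynomial.X '' Z : Set (MvPolynomial X R)) = P :=
      hP.2 _ (span_small hZcomp) hPZ
    have hYZ : {x : X | MvPolynomial.X x ∈ P} = Z := by
      ext x
      rw [Set.mem_setOf_eq, ← hspanZ, mem_span_X_iff]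
    constructor
    · constructor
      · rw [hYZ]; exact hZcomp
      · intro Y' hYY' hY'comp
        have hPY' : P ≤ Ideal.span (MvPolynomial.X '' Y' : Set (MvPolynomial X R)) := by
          rw [← hspanZ]
          exact Ideal.span_mono (Set.image_mono (hYZ ▸ hYY'))
        have hspanY' : Ideal.span (MvPolynomial.X '' Y' : Set (MvPolynomial X R)) = P :=
          hP.2 _ (span_small hY'comp) hPY'
        refine subset_antisymm ?_ hYY'
        intro x hx
        show MvPolynomial.X x ∈ P
        rw [← hspanY']
        exact mem_span_X_iff.mpr hx
    · rw [hYZ]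
      exact hspanZ
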